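/- arXiv:2406.02226 — 4 statements merged into one kernel-verified Lean document; each statement's English description precedes it below -/
import Mathlib

section
/- The generalized trigonometric functions are periodic with period Ω: for all θ ∈ ℝ, Cs(θ + Ω) = Cs(θ) and Sn(θ + Ω) = Sn(θ), where Ω = 2·l^{−1/2}·Γ(1/2)·Γ(1/(2l))/Γ(1/2 + 1/(2l)). -/
set_option linter.unusedSectionVars false
set_option maxHeartbeats 1000000

open Set MeasureTheory intervalIntegral
open scoped NNReal

/-- The period Ω of the generalized trigonometric functions with p = 1, q = l. -/
noncomputable def Omega (l : ℕ) : ℝ :=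
  2 * (l : ℝ) ^ (-(1 / 2 : ℝ)) * Real.Gamma (1 / 2) * Real.Gamma (1 / (2 * (l : ℝ))) /
    Real.Gamma (1 / 2 + 1 / (2 * (l : ℝ)))

/-- The Beta-type integrand whose primitive inverts `Cs`. -/
noncomputable def betaFn (l : ℕ) : ℝ → ℝ :=
  fun t => t ^ (1 / (2 * (l : ℝ)) - 1) * (1 - t) ^ (-(1 / 2) : ℝ)




private lemma pow_lip (m : ℕ) {x y : ℝ} (hx : |x| ≤ 1) (hy : |y| ≤ 1) :
    |x ^ m - y ^ m| ≤ m * |x - y| := by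
  induction m with
  | zero => simp
  | succ m ih =>
    have h : x ^ (m+1) - y ^ (m+1) = x ^ m * (x - y) + (x ^ m - y ^ m) * y := by ring
    rw [h]
    have h1 : |x ^ m * (x - y)| ≤ 1 * |x - y| := by
      rw [abs_mul, abs_pow]
      have : |x| ^ m ≤ 1 := pow_le_one₀ (abs_nonneg x) hx
      nlinarith [abs_nonneg (x - y)]
    have h2 : |(x ^ m - y ^ m) * y| ≤ (m * |x - y|) * 1 := by
      rw [abs_mul]
      nlinarith [abs_nonneg (x ^ m - y ^ m), abs_nonneg (x - y), Nat.cast_nonneg (α := ℝ) m]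
    calc |x ^ m * (x - y) + (x ^ m - y ^ m) * y|
        ≤ |x ^ m * (x - y)| + |(x ^ m - y ^ m) * y| := abs_add_le _ _
      _ ≤ 1 * |x - y| + (m * |x - y|) * 1 := add_le_add h1 h2
      _ = ((m : ℝ) + 1) * |x - y| := by ring
      _ = ((m + 1 : ℕ) : ℝ) * |x - y| := by push_cast; ring

/-- Uniqueness of solutions of our ODE, given the a priori bound `|C| ≤ 1`. -/
private lemma ode_uniq (m : ℕ) (f g : ℝ → ℝ × ℝ) (t₀ : ℝ)
    (hf : ∀ t, HasDerivAt f (-(f t).2, (f t).1 ^ m) t) (hf1 : ∀ t, |(f t).1| ≤ 1)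
    (hg : ∀ t, HasDerivAt g (-(g t).2, (g t).1 ^ m) t) (hg1 : ∀ t, |(g t).1| ≤ 1)
    (heq : f t₀ = g t₀) : ∀ t, f t = g t := by
  set v : ℝ → ℝ × ℝ → ℝ × ℝ := fun _ p => (-p.2, p.1 ^ m) with hv_def
  set s : ℝ → Set (ℝ × ℝ) := fun _ => Icc (-1 : ℝ) 1 ×ˢ (univ : Set ℝ) with hs_def
  have hK : ∀ t, LipschitzOnWith ((m + 1 : ℕ) : ℝ≥0) (v t) (s t) := by
    intro t
    rw [lipschitzOnWith_iff_dist_le_mul]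
    rintro p ⟨hp1, -⟩ q ⟨hq1, -⟩
    have hp1' : |p.1| ≤ 1 := abs_le.2 ⟨hp1.1, hp1.2⟩
    have hq1' : |q.1| ≤ 1 := abs_le.2 ⟨hq1.1, hq1.2⟩
    have hd : dist p q = max (dist p.1 q.1) (dist p.2 q.2) := rfl
    have hd2 : dist (v t p) (v t q) = max (dist (-p.2) (-q.2)) (dist (p.1 ^ m) (q.1 ^ m)) := rfl
    rw [hd2]
    have h1 : dist (-p.2) (-q.2) = dist p.2 q.2 := dist_neg_neg _ _
    have h2 : dist (p.1 ^ m) (q.1 ^ m) ≤ m * dist p.1 q.1 := by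
      rw [Real.dist_eq, Real.dist_eq]; exact pow_lip m hp1' hq1'
    have hKc : (((m + 1 : ℕ) : ℝ≥0) : ℝ) = (m : ℝ) + 1 := by push_cast; ring
    rw [hKc, hd]
    have hmax0 : (0:ℝ) ≤ max (dist p.1 q.1) (dist p.2 q.2) :=
      le_max_of_le_left dist_nonneg
    have hm1 : dist p.1 q.1 ≤ max (dist p.1 q.1) (dist p.2 q.2) := le_max_left _ _
    have hm2 : dist p.2 q.2 ≤ max (dist p.1 q.1) (dist p.2 q.2) := le_max_right _ _
    apply max_le
    · rw [h1]; nlinarith [Nat.cast_nonneg (α := ℝ) m]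
    · have : (m:ℝ) * dist p.1 q.1 ≤ (m:ℝ) * max (dist p.1 q.1) (dist p.2 q.2) := by
        nlinarith [Nat.cast_nonneg (α := ℝ) m]
      nlinarith [Nat.cast_nonneg (α := ℝ) m]
  intro t
  set a : ℝ := min t₀ t - 1 with ha_def
  set b : ℝ := max t₀ t + 1 with hb_def
  have ht₀ : t₀ ∈ Ioo a b := by
    constructor
    · have := min_le_left t₀ t; simp only [ha_def]; linarith
    · have := le_max_left t₀ t; simp only [hb_def]; linarith
  have ht : t ∈ Icc a b := by
    constructor
    · have := min_le_right t₀ t; simp only [ha_def]; linarith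
    · have := le_max_right t₀ t; simp only [hb_def]; linarith
  have hmem : ∀ (h : ℝ → ℝ × ℝ), (∀ u, |(h u).1| ≤ 1) → ∀ u ∈ Ioo a b, h u ∈ s u := by
    intro h h1 u _
    exact ⟨abs_le.1 (h1 u), mem_univ _⟩
  exact ODE_solution_unique_of_mem_Icc (fun t _ => hK t) ht₀
    (fun u _ => (hf u).continuousAt.continuousWithinAt)
    (fun u _ => hf u) (hmem f hf1)
    (fun u _ => (hg u).continuousAt.continuousWithinAt)
    (fun u _ => hg u) (hmem g hg1) heq ht


section
variable {l : ℕ} (hl : 2 ≤ l)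
include hl

private lemma hl0 : (0:ℝ) < (l:ℝ) := by positivity

private lemma betaFn_eq_complex :
    ∀ x ∈ Ioc (0:ℝ) 1,
      ((betaFn l x : ℝ) : ℂ)
        = (x : ℂ) ^ ((((1 / (2 * (l : ℝ))) : ℝ) : ℂ) - 1)
            * ((1 : ℂ) - (x : ℂ)) ^ ((((1 / 2 : ℝ)) : ℂ) - 1) := by
  intro x hx
  have hx0 : (0:ℝ) ≤ x := hx.1.le
  have hx1 : (0:ℝ) ≤ 1 - x := by linarith [hx.2]
  have e1 : (((x ^ (1 / (2 * (l : ℝ)) - 1) : ℝ)) : ℂ)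
      = (x : ℂ) ^ ((((1 / (2 * (l : ℝ))) : ℝ) : ℂ) - 1) := by
    rw [Complex.ofReal_cpow hx0]
    push_cast
    ring_nf
  have e2 : ((((1 - x) ^ (-(1 / 2) : ℝ) : ℝ)) : ℂ)
      = ((1 : ℂ) - (x : ℂ)) ^ ((((1 / 2 : ℝ)) : ℂ) - 1) := by
    rw [Complex.ofReal_cpow hx1]
    push_cast
    norm_num
  rw [betaFn, Complex.ofReal_mul, e1, e2]

private lemma betaFn_intervalIntegrable :
    IntervalIntegrable (betaFn l) MeasureTheory.volume 0 1 := by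
  have hu : 0 < (((1 / (2 * (l : ℝ)) : ℝ) : ℂ)).re := by
    simp only [Complex.ofReal_re]
    have := hl0 hl; positivity
  have hv : 0 < ((((1 / 2 : ℝ)) : ℂ)).re := by norm_num
  have hconv := Complex.betaIntegral_convergent hu hv
  rw [intervalIntegrable_iff_integrableOn_Ioc_of_le zero_le_one] at hconv ⊢
  have hre : Integrable (fun x : ℝ =>
      Complex.re ((x : ℂ) ^ ((((1 / (2 * (l : ℝ))) : ℝ) : ℂ) - 1)
        * ((1 : ℂ) - (x : ℂ)) ^ ((((1 / 2 : ℝ)) : ℂ) - 1)))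
      (MeasureTheory.volume.restrict (Ioc (0:ℝ) 1)) := hconv.re
  apply hre.congr
  rw [Filter.eventuallyEq_iff_exists_mem]
  refine ⟨Ioc (0:ℝ) 1, ?_, fun x hx => ?_⟩
  · rw [mem_ae_iff]
    simp [MeasureTheory.Measure.restrict_apply, compl_inter_self]
  · show (_ : ℂ).re = betaFn l x
    rw [← betaFn_eq_complex hl x hx, Complex.ofReal_re]

private lemma betaFn_integral :
    ∫ t in (0:ℝ)..1, betaFn l t
      = Real.Gamma (1 / (2 * (l:ℝ))) * Real.Gamma (1 / 2)
        / Real.Gamma (1 / (2 * (l:ℝ)) + 1 / 2) := by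
  set a : ℝ := 1 / (2 * (l : ℝ)) with ha_def
  have hapos : 0 < a := by rw [ha_def]; have := hl0 hl; positivity
  have hu : 0 < ((a : ℂ)).re := by simpa using hapos
  have hv : 0 < ((((1 / 2 : ℝ)) : ℂ)).re := by norm_num
  have h2 : ∫ x in (0:ℝ)..1,
      (x : ℂ) ^ ((a : ℂ) - 1) * ((1:ℂ) - (x:ℂ)) ^ ((((1 / 2 : ℝ)) : ℂ) - 1)
      = ((∫ t in (0:ℝ)..1, betaFn l t : ℝ) : ℂ) := by
    rw [← intervalIntegral.integral_ofReal]
    apply intervalIntegral.integral_congr_ae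
    apply MeasureTheory.ae_of_all
    intro x hx
    rw [uIoc_of_le zero_le_one] at hx
    exact (betaFn_eq_complex hl x hx).symm
  have hbeta : Complex.betaIntegral (a : ℂ) (((1/2 : ℝ)) : ℂ)
      = ((∫ t in (0:ℝ)..1, betaFn l t : ℝ) : ℂ) := by
    rw [Complex.betaIntegral]; exact h2
  have hGG := Complex.Gamma_mul_Gamma_eq_betaIntegral hu hv
  rw [hbeta] at hGG
  have hsum : (a : ℂ) + (((1/2:ℝ)) : ℂ) = (((a + 1/2 : ℝ)) : ℂ) := by push_cast; ring
  rw [hsum, Complex.Gamma_ofReal, Complex.Gamma_ofReal, Complex.Gamma_ofReal] at hGG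
  have hGpos : 0 < Real.Gamma (a + 1/2) := Real.Gamma_pos_of_pos (by linarith)
  have hreal : Real.Gamma a * Real.Gamma (1/2)
      = Real.Gamma (a + 1/2) * ∫ t in (0:ℝ)..1, betaFn l t := by
    have := hGG
    rw [← Complex.ofReal_mul, ← Complex.ofReal_mul] at this
    exact_mod_cast this
  rw [ha_def] at hreal ⊢
  field_simp at hreal ⊢
  linarith [hreal]

end

section
variable {l : ℕ} {Cs Sn : ℝ → ℝ}
  (hl : 2 ≤ l)
  (hCs : ∀ θ : ℝ, HasDerivAt Cs (-(Sn θ)) θ)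
  (hSn : ∀ θ : ℝ, HasDerivAt Sn (Cs θ ^ (2 * l - 1)) θ)
  (hCs0 : Cs 0 = 1) (hSn0 : Sn 0 = 0)

include hl hCs hSn hCs0 hSn0

private lemma energy : ∀ θ : ℝ, (l : ℝ) * Sn θ ^ 2 + Cs θ ^ (2 * l) = 1 := by
  have hconst : ∀ θ : ℝ, (fun θ => (l : ℝ) * Sn θ ^ 2 + Cs θ ^ (2 * l)) θ
      = (fun θ => (l : ℝ) * Sn θ ^ 2 + Cs θ ^ (2 * l)) 0 := by
    intro θ
    apply is_const_of_deriv_eq_zero (𝕜 := ℝ) (f := fun θ => (l : ℝ) * Sn θ ^ 2 + Cs θ ^ (2 * l))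
    · intro x
      exact (((hSn x).pow 2).const_mul _).add ((hCs x).pow (2 * l)) |>.differentiableAt
    · intro x
      have hD : HasDerivAt (fun θ => (l : ℝ) * Sn θ ^ 2 + Cs θ ^ (2 * l))
          ((l : ℝ) * (2 * Sn x ^ (2 - 1) * Cs x ^ (2 * l - 1))
            + (2 * l : ℕ) * Cs x ^ (2 * l - 1) * (-(Sn x))) x :=
        (((hSn x).pow 2).const_mul _).add ((hCs x).pow (2 * l))
      rw [hD.deriv]
      push_cast
      ring
  intro θ
  have := hconst θ
  simp only at this
  rw [this, hCs0, hSn0]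
  simp

private lemma Cs_abs_le : ∀ θ : ℝ, |Cs θ| ≤ 1 := by
  intro θ
  have hE := energy hl hCs hSn hCs0 hSn0 θ
  have h0 : (0:ℝ) ≤ (l : ℝ) * Sn θ ^ 2 := by positivity
  have h1 : Cs θ ^ (2 * l) ≤ 1 := by linarith
  by_contra h
  push_neg at h
  have h2 : (1:ℝ) < |Cs θ| ^ (2 * l) := one_lt_pow₀ h (by omega)
  rw [← abs_pow] at h2
  have h3 : Cs θ ^ (2 * l) = |Cs θ ^ (2 * l)| := by
    rw [abs_of_nonneg]
    rw [mul_comm, pow_mul]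
    positivity
  linarith [h3 ▸ h1]

private lemma exists_T0 :
    ∃ T₀ : ℝ, 0 < T₀ ∧ Cs T₀ = 0 ∧ (∀ t ∈ Ico 0 T₀, 0 < Cs t) := by
  have hCc : Continuous Cs := continuous_iff_continuousAt.2 fun x => (hCs x).continuousAt
  have hSc : Continuous Sn := continuous_iff_continuousAt.2 fun x => (hSn x).continuousAt
  have hZne : ∃ t : ℝ, 0 ≤ t ∧ Cs t = 0 := by
    by_contra hne
    push_neg at hne
    have hpos : ∀ t : ℝ, 0 ≤ t → 0 < Cs t := by
      intro t ht
      rcases lt_trichotomy (Cs t) 0 with h | h | h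
      · have hmem : (0:ℝ) ∈ Icc (Cs t) (Cs 0) := ⟨le_of_lt h, by rw [hCs0]; norm_num⟩
        obtain ⟨s, hs, hfs⟩ := intermediate_value_Icc' ht hCc.continuousOn hmem
        exact absurd hfs (hne s hs.1)
      · exact absurd h (hne t ht)
      · exact h
    have hSnmono : StrictMonoOn Sn (Ici 0) := by
      apply strictMonoOn_of_deriv_pos (convex_Ici 0) hSc.continuousOn
      intro x hx
      rw [interior_Ici] at hx
      rw [(hSn x).deriv]
      exact pow_pos (hpos x (le_of_lt hx)) _
    set ε := Sn 1 with hε_def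
    have hε : 0 < ε := by
      have := hSnmono self_mem_Ici (mem_Ici.2 zero_le_one) one_pos
      rwa [hSn0] at this
    have hanti : AntitoneOn (fun t => Cs t + ε * t) (Ici 1) := by
      apply antitoneOn_of_deriv_nonpos (convex_Ici 1)
      · exact (hCc.add (continuous_const.mul continuous_id)).continuousOn
      · intro x _
        exact ((hCs x).add ((hasDerivAt_id x).const_mul ε)).differentiableAt.differentiableWithinAt
      · intro x hx
        rw [interior_Ici] at hx
        have hx1 : 1 < x := mem_Ioi.1 hx
        have hd : deriv (fun t => Cs t + ε * t) x = -Sn x + ε * 1 :=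
          ((hCs x).add ((hasDerivAt_id x).const_mul ε)).deriv
        rw [hd]
        have hlt : ε < Sn x :=
          hSnmono (mem_Ici.2 zero_le_one) (mem_Ici.2 (by linarith : (0:ℝ) ≤ x)) hx1
        linarith
    set b := 1 + 2 / ε with hb_def
    have h2ε : 0 < 2 / ε := by positivity
    have hb1 : (1:ℝ) ≤ b := by rw [hb_def]; linarith
    have hchain := hanti self_mem_Ici (mem_Ici.2 hb1) hb1
    simp only at hchain
    have hCs1 : Cs 1 ≤ 1 := (abs_le.1 (Cs_abs_le hl hCs hSn hCs0 hSn0 1)).2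
    have hCsb : 0 < Cs b := hpos b (by linarith)
    have hεb : ε * b = ε + 2 := by
      rw [hb_def]; field_simp
    rw [hεb] at hchain
    linarith
  obtain ⟨t₁, ht₁0, ht₁⟩ := hZne
  set Z := {t : ℝ | 0 ≤ t ∧ Cs t = 0} with hZ
  have hZne' : Z.Nonempty := ⟨t₁, ht₁0, ht₁⟩
  have hZcl : IsClosed Z := by
    have hZeq : Z = Ici 0 ∩ Cs ⁻¹' {0} := by ext t; simp [hZ, mem_Ici, and_comm]
    rw [hZeq]; exact isClosed_Ici.inter (isClosed_singleton.preimage hCc)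
  have hZbdd : BddBelow Z := ⟨0, fun t ht => ht.1⟩
  set T₀ := sInf Z with hT
  have hTZ : T₀ ∈ Z := hZcl.csInf_mem hZne' hZbdd
  refine ⟨T₀, ?_, hTZ.2, ?_⟩
  · rcases eq_or_lt_of_le hTZ.1 with h | h
    · exfalso; have := hTZ.2; rw [← h] at this; rw [hCs0] at this; norm_num at this
    · exact h
  · rintro t ⟨ht0, htT⟩
    by_contra h
    push_neg at h
    have hmem : (0:ℝ) ∈ Icc (Cs t) (Cs 0) := ⟨h, by rw [hCs0]; norm_num⟩
    obtain ⟨s, hs, hfs⟩ := intermediate_value_Icc' ht0 hCc.continuousOn hmem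
    have hle : T₀ ≤ s := csInf_le hZbdd ⟨hs.1, hfs⟩
    linarith [hs.2]

private lemma T0_eq (T₀ : ℝ) (hT0 : 0 < T₀) (hT0z : Cs T₀ = 0)
    (hT0pos : ∀ t ∈ Ico 0 T₀, 0 < Cs t) : T₀ = Omega l / 4 := by
  have hlpos : (0:ℝ) < (l:ℝ) := by positivity
  have hCc : Continuous Cs := continuous_iff_continuousAt.2 fun x => (hCs x).continuousAt
  have hSc : Continuous Sn := continuous_iff_continuousAt.2 fun x => (hSn x).continuousAt
  set a : ℝ := 1 / (2 * (l : ℝ)) with ha_def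
  have h2la : 2 * (l:ℝ) * a = 1 := by rw [ha_def]; field_simp
  -- Sn positive on (0, T₀]
  have hSnmono : StrictMonoOn Sn (Icc 0 T₀) := by
    apply strictMonoOn_of_deriv_pos (convex_Icc 0 T₀) hSc.continuousOn
    intro x hx
    rw [interior_Icc] at hx
    rw [(hSn x).deriv]
    exact pow_pos (hT0pos x ⟨hx.1.le, hx.2⟩) _
  have hSnpos : ∀ t ∈ Ioc 0 T₀, 0 < Sn t := by
    intro t ht
    have := hSnmono (left_mem_Icc.2 hT0.le) ⟨ht.1.le, ht.2⟩ ht.1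
    rwa [hSn0] at this
  -- Cs < 1 on (0, T₀)
  have hCanti : StrictAntiOn Cs (Icc 0 T₀) := by
    apply strictAntiOn_of_deriv_neg (convex_Icc 0 T₀) hCc.continuousOn
    intro x hx
    rw [interior_Icc] at hx
    rw [(hCs x).deriv]
    have := hSnpos x ⟨hx.1, hx.2.le⟩
    linarith
  have hClt1 : ∀ t ∈ Ioc 0 T₀, Cs t < 1 := by
    intro t ht
    have := hCanti (left_mem_Icc.2 hT0.le) ⟨ht.1.le, ht.2⟩ ht.1
    rwa [hCs0] at this
  -- the primitive
  set I : ℝ → ℝ := fun c => ∫ t in c..1, betaFn l t with hI_def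
  set κ : ℝ := Real.sqrt l / (2 * l) with hκ_def
  set ψ : ℝ → ℝ := fun θ => κ * I (Cs θ ^ (2 * l)) with hψ_def
  have hInt : IntervalIntegrable (betaFn l) MeasureTheory.volume 0 1 :=
    betaFn_intervalIntegrable hl
  have hIcont : ContinuousOn I (Icc 0 1) := by
    have h1 : IntegrableOn (betaFn l) (uIcc (0:ℝ) 1) MeasureTheory.volume := by
      rw [uIcc_of_le zero_le_one]
      have h2 : IntegrableOn (betaFn l) (Ioc (0:ℝ) 1) MeasureTheory.volume :=
        (intervalIntegrable_iff_integrableOn_Ioc_of_le zero_le_one).1 hInt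
      exact h2.congr_set_ae Ioc_ae_eq_Icc.symm
    have := continuousOn_primitive_interval_left (a := 0) (b := 1)
      (μ := MeasureTheory.volume) h1
    rwa [uIcc_of_le zero_le_one] at this
  have hpow_mem : ∀ θ : ℝ, Cs θ ^ (2 * l) ∈ Icc (0:ℝ) 1 := by
    intro θ
    constructor
    · rw [mul_comm, pow_mul]; positivity
    · have h := Cs_abs_le hl hCs hSn hCs0 hSn0 θ
      calc Cs θ ^ (2*l) ≤ |Cs θ ^ (2*l)| := le_abs_self _
        _ = |Cs θ| ^ (2*l) := abs_pow _ _
        _ ≤ 1 := pow_le_one₀ (abs_nonneg _) h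
  have hψcont : ContinuousOn ψ (Icc 0 T₀) := by
    apply continuousOn_const.mul
    exact hIcont.comp ((hCc.pow (2*l)).continuousOn) (fun θ _ => hpow_mem θ)
  -- derivative of ψ is 1 on the open interval
  have hψderiv : ∀ θ ∈ Ioo 0 T₀, HasDerivAt ψ 1 θ := by
    intro θ hθ
    have hx0 : 0 < Cs θ := hT0pos θ ⟨hθ.1.le, hθ.2⟩
    have hx1 : Cs θ < 1 := hClt1 θ ⟨hθ.1, hθ.2.le⟩
    have hs0 : 0 < Sn θ := hSnpos θ ⟨hθ.1, hθ.2.le⟩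
    set x := Cs θ
    set s := Sn θ
    set c₀ : ℝ := x ^ (2 * l) with hc₀_def
    have hc₀0 : 0 < c₀ := pow_pos hx0 _
    have hc₀1 : c₀ < 1 := pow_lt_one₀ hx0.le hx1 (by omega)
    -- continuity of betaFn near c₀
    have hcontOn : ContinuousOn (betaFn l) (Ioo 0 1) := by
      intro t ht
      apply ContinuousAt.continuousWithinAt
      apply ContinuousAt.mul
      · exact Real.continuousAt_rpow_const t _ (Or.inl ht.1.ne')
      · exact (Real.continuousAt_rpow_const (1 - t) _
          (Or.inl (sub_ne_zero_of_ne (ne_of_gt ht.2)))).comp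
          ((continuous_const.sub continuous_id).continuousAt)
    have hmeas : StronglyMeasurableAtFilter (betaFn l) (nhds c₀) MeasureTheory.volume :=
      ContinuousOn.stronglyMeasurableAtFilter isOpen_Ioo hcontOn c₀ ⟨hc₀0, hc₀1⟩
    have hfc : ContinuousAt (betaFn l) c₀ :=
      (hcontOn.continuousAt (isOpen_Ioo.mem_nhds ⟨hc₀0, hc₀1⟩))
    have hInt' : IntervalIntegrable (betaFn l) MeasureTheory.volume c₀ 1 := by
      apply hInt.mono_set
      rw [uIcc_of_le hc₀1.le, uIcc_of_le zero_le_one]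
      exact Icc_subset_Icc hc₀0.le le_rfl
    have hI' : HasDerivAt I (-(betaFn l c₀)) c₀ :=
      integral_hasDerivAt_left hInt' hmeas hfc
    have hg : HasDerivAt (fun θ => Cs θ ^ (2 * l))
        ((2 * l : ℕ) * Cs θ ^ (2 * l - 1) * (-(Sn θ))) θ := (hCs θ).pow (2 * l)
    have hcomp := (hI'.comp θ hg).const_mul κ
    refine hcomp.congr_deriv (Eq.symm ?_)
    -- now prove 1 = κ * (-(betaFn l c₀) * ((2l) * x^(2l-1) * (-s)))
    have hsl : (0:ℝ) < Real.sqrt l := Real.sqrt_pos.2 hlpos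
    set y : ℝ := Real.sqrt l * s with hy_def
    have hy0 : 0 < y := by positivity
    have hE := energy hl hCs hSn hCs0 hSn0 θ
    have h1c : 1 - c₀ = y ^ 2 := by
      have hsq : Real.sqrt l ^ 2 = (l:ℝ) := Real.sq_sqrt hlpos.le
      rw [hy_def, mul_pow, hsq, hc₀_def]
      linarith
    have step2 : (1 - c₀) ^ (-(1/2) : ℝ) = y⁻¹ := by
      rw [h1c, ← Real.rpow_natCast y 2, ← Real.rpow_mul hy0.le]
      norm_num [Real.rpow_neg_one]
    have step1 : c₀ ^ (a - 1) = x ^ (1 - 2 * (l:ℝ)) := by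
      rw [hc₀_def, ← Real.rpow_natCast x (2*l), ← Real.rpow_mul hx0.le]
      congr 1
      push_cast
      nlinarith [h2la]
    have hxpow : x ^ (2 * l - 1) = x ^ (2 * (l:ℝ) - 1) := by
      rw [← Real.rpow_natCast x (2*l - 1)]
      congr 1
      push_cast [Nat.cast_sub (by omega : 1 ≤ 2 * l)]
      ring
    have hxx : x ^ (1 - 2*(l:ℝ)) * x ^ (2*(l:ℝ) - 1) = 1 := by
      rw [← Real.rpow_add hx0]
      norm_num
    have hbeta : betaFn l c₀ = x ^ (1 - 2*(l:ℝ)) * y⁻¹ := by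
      rw [betaFn]
      rw [← ha_def, step1, step2]
    rw [hbeta, hxpow]
    push_cast
    have hrearr : κ * (-(x ^ (1 - 2*(l:ℝ)) * y⁻¹) * (2 * (l:ℝ) * x ^ (2*(l:ℝ) - 1) * (-(Sn θ))))
        = (x ^ (1 - 2*(l:ℝ)) * x ^ (2*(l:ℝ) - 1)) * (κ * (2 * (l:ℝ)) * s * y⁻¹) := by ring
    rw [hrearr, hxx, one_mul, hκ_def, hy_def]
    rw [eq_comm]
    field_simp
  -- ψ θ = θ on [0, T₀]
  have hψ0 : ψ 0 = 0 := by
    rw [hψ_def]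
    simp only [hCs0, one_pow]
    rw [hI_def]
    simp [integral_same]
  have hψ_eq : ∀ θ ∈ Icc 0 T₀, ψ θ = θ := by
    have hcont_h : ContinuousOn (fun θ => ψ θ - θ) (Icc 0 T₀) :=
      hψcont.sub continuousOn_id
    have hd0 : ∀ x ∈ interior (Icc 0 T₀), deriv (fun θ => ψ θ - θ) x = 0 := by
      intro x hx
      rw [interior_Icc] at hx
      have := (hψderiv x hx).sub (hasDerivAt_id x)
      simp only [sub_self] at this
      exact this.deriv
    have hdiff : DifferentiableOn ℝ (fun θ => ψ θ - θ) (interior (Icc 0 T₀)) := by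
      intro x hx
      rw [interior_Icc] at hx
      exact ((hψderiv x hx).sub (hasDerivAt_id x)).differentiableAt.differentiableWithinAt
    have hmono := monotoneOn_of_deriv_nonneg (convex_Icc 0 T₀) hcont_h hdiff
      (fun x hx => (hd0 x hx).ge)
    have hanti := antitoneOn_of_deriv_nonpos (convex_Icc 0 T₀) hcont_h hdiff
      (fun x hx => (hd0 x hx).le)
    intro θ hθ
    have h0m : (0:ℝ) ∈ Icc 0 T₀ := left_mem_Icc.2 hT0.le
    have h1 := hmono h0m hθ hθ.1
    have h2 := hanti h0m hθ hθ.1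
    simp only at h1 h2
    rw [hψ0] at h1 h2
    linarith
  -- evaluate at T₀
  have hT0val := hψ_eq T₀ (right_mem_Icc.2 hT0.le)
  rw [hψ_def] at hT0val
  simp only [hT0z] at hT0val
  rw [zero_pow (by omega : 2 * l ≠ 0)] at hT0val
  rw [hI_def] at hT0val
  simp only at hT0val
  rw [betaFn_integral hl] at hT0val
  -- final arithmetic
  rw [← hT0val, Omega]
  have hsl : (0:ℝ) < Real.sqrt l := Real.sqrt_pos.2 hlpos
  have hrp : (l:ℝ) ^ (-(1/2 : ℝ)) = (Real.sqrt l)⁻¹ := by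
    rw [Real.rpow_neg hlpos.le, Real.sqrt_eq_rpow]
  have hsq : Real.sqrt l * Real.sqrt l = (l:ℝ) := Real.mul_self_sqrt hlpos.le
  have hκ2 : κ = (Real.sqrt l)⁻¹ / 2 := by
    rw [hκ_def]
    field_simp
    linear_combination hsq
  rw [hrp, hκ2, add_comm (1/2) (1 / (2 * (l:ℝ)))]
  ring

end

/-- The generalized trigonometric functions are periodic with period Ω. -/

theorem genTrig_periodic (l : ℕ) (hl : 2 ≤ l) (Cs Sn : ℝ → ℝ)
    (hCs : ∀ θ : ℝ, HasDerivAt Cs (-(Sn θ)) θ)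
    (hSn : ∀ θ : ℝ, HasDerivAt Sn (Cs θ ^ (2 * l - 1)) θ)
    (hCs0 : Cs 0 = 1) (hSn0 : Sn 0 = 0) :
    ∀ θ : ℝ, Cs (θ + Omega l) = Cs θ ∧ Sn (θ + Omega l) = Sn θ := by
  obtain ⟨T₀, hT0, hT0z, hT0pos⟩ := exists_T0 hl hCs hSn hCs0 hSn0
  have hTeq : T₀ = Omega l / 4 := T0_eq hl hCs hSn hCs0 hSn0 T₀ hT0 hT0z hT0pos
  have hOmega : Omega l = 4 * T₀ := by rw [hTeq]; ring
  set m : ℕ := 2 * l - 1 with hm_def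
  have hm_odd : Odd m := ⟨l - 1, by omega⟩
  have habs : ∀ t : ℝ, |Cs t| ≤ 1 := Cs_abs_le hl hCs hSn hCs0 hSn0
  set F : ℝ → ℝ × ℝ := fun θ => (Cs θ, Sn θ) with hF_def
  have hF : ∀ t, HasDerivAt F (-(F t).2, (F t).1 ^ m) t := fun t =>
    (hCs t).prodMk (hSn t)
  have hF1 : ∀ t, |(F t).1| ≤ 1 := fun t => habs t
  -- even/odd symmetry
  set G : ℝ → ℝ × ℝ := fun θ => (Cs (-θ), -Sn (-θ)) with hG_def
  have hG : ∀ t, HasDerivAt G (-(G t).2, (G t).1 ^ m) t := by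
    intro t
    have h1 : HasDerivAt (fun θ : ℝ => Cs (-θ)) (Sn (-t)) t := by
      have := (hCs (-t)).comp t (hasDerivAt_neg t)
      simpa [Function.comp_def] using this
    have h2 : HasDerivAt (fun θ : ℝ => -Sn (-θ)) (Cs (-t) ^ m) t := by
      have := ((hSn (-t)).comp t (hasDerivAt_neg t)).neg
      simpa [Function.comp_def, Pi.neg_def] using this
    have := h1.prodMk h2
    simpa [hG_def] using this
  have hG1 : ∀ t, |(G t).1| ≤ 1 := fun t => habs (-t)
  have hGF0 : F 0 = G 0 := by
    simp [hF_def, hG_def, hCs0, hSn0]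
  have heven := ode_uniq m F G 0 hF hF1 hG hG1 hGF0
  have hCs_even : ∀ t : ℝ, Cs (-t) = Cs t := by
    intro t; have := heven t; rw [Prod.ext_iff] at this
    exact this.1.symm
  have hSn_odd : ∀ t : ℝ, Sn (-t) = -Sn t := by
    intro t; have := heven t; rw [Prod.ext_iff] at this
    have h2 := this.2
    simp only [hF_def, hG_def] at h2
    linarith [h2]
  -- reflection symmetry about T₀
  set H : ℝ → ℝ × ℝ := fun θ => (-Cs (2 * T₀ - θ), Sn (2 * T₀ - θ)) with hH_def
  have hH : ∀ t, HasDerivAt H (-(H t).2, (H t).1 ^ m) t := by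
    intro t
    have hr : HasDerivAt (fun θ : ℝ => 2 * T₀ - θ) (-1) t := by
      simpa using (hasDerivAt_id t).const_sub (2 * T₀)
    have h1 : HasDerivAt (fun θ : ℝ => -Cs (2 * T₀ - θ)) (-Sn (2 * T₀ - t)) t := by
      have := ((hCs (2 * T₀ - t)).comp t hr).neg
      simpa [Function.comp_def, Pi.neg_def] using this
    have h2 : HasDerivAt (fun θ : ℝ => Sn (2 * T₀ - θ)) (-(Cs (2 * T₀ - t) ^ m)) t := by
      have := (hSn (2 * T₀ - t)).comp t hr
      simpa [Function.comp_def] using this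
    have hpow : (-(Cs (2 * T₀ - t))) ^ m = -(Cs (2 * T₀ - t) ^ m) := hm_odd.neg_pow _
    have hprod := h1.prodMk h2
    have hgoal : ((-(H t).2 : ℝ), (H t).1 ^ m)
        = (-Sn (2 * T₀ - t), -(Cs (2 * T₀ - t) ^ m)) := by
      simp only [hH_def]
      rw [Prod.mk.injEq]
      exact ⟨rfl, hpow⟩
    rw [hgoal]
    exact hprod
  have hH1 : ∀ t, |(H t).1| ≤ 1 := by
    intro t
    simp only [hH_def, abs_neg]
    exact habs _
  have hHF : F T₀ = H T₀ := by
    have e : 2 * T₀ - T₀ = T₀ := by ring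
    simp [hF_def, hH_def, e, hT0z]
  have href := ode_uniq m F H T₀ hF hF1 hH hH1 hHF
  have hCs_ref : ∀ t : ℝ, Cs t = -Cs (2 * T₀ - t) := by
    intro t; have := href t; rw [Prod.ext_iff] at this; exact this.1
  have hSn_ref : ∀ t : ℝ, Sn t = Sn (2 * T₀ - t) := by
    intro t; have := href t; rw [Prod.ext_iff] at this; exact this.2
  -- combine
  have hanti : ∀ t : ℝ, Cs (t + 2 * T₀) = -Cs t ∧ Sn (t + 2 * T₀) = -Sn t := by
    intro t
    constructor
    · have h1 := hCs_ref (t + 2 * T₀)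
      have e : 2 * T₀ - (t + 2 * T₀) = -t := by ring
      rw [e, hCs_even] at h1
      linarith [h1]
    · have h1 := hSn_ref (t + 2 * T₀)
      have e : 2 * T₀ - (t + 2 * T₀) = -t := by ring
      rw [e, hSn_odd] at h1
      linarith [h1]
  intro θ
  have e4 : θ + Omega l = (θ + 2 * T₀) + 2 * T₀ := by rw [hOmega]; ring
  constructor
  · rw [e4, (hanti (θ + 2 * T₀)).1, (hanti θ).1]; ring
  · rw [e4, (hanti (θ + 2 * T₀)).2, (hanti θ).2]; ring
end

section
/- Let K, n, j, h be integers with K ≥ 2, n ≥ 1, j ≥ 1 and 1 ≤ h ≤ K−1. Then there do not exist nonnegative integers α_0, α_1, …, α_n and β_1, …, β_h such that α_0 + α_1 + ⋯ + α_n + β_1 + ⋯ + β_h = jK + 1 and α_0 + (K+1)α_1 + (2K+1)α_2 + ⋯ + (nK+1)α_n + (nK+2)β_1 + (nK+3)β_2 + ⋯ + (nK+h+1)β_h = nK + h + 1. -/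
/-- The combinatorial core of the lemma on vanishing generalized Lyapunov
coefficients: no choice of nonnegative integers α_0,…,α_n, β_1,…,β_h satisfies
the two stated linear equations. -/
theorem no_coefficient_contribution (K n j h : ℕ) (hK : 2 ≤ K) (hn : 1 ≤ n)
    (hj : 1 ≤ j) (hh1 : 1 ≤ h) (hh2 : h ≤ K - 1) :
    ¬ ∃ (α β : ℕ → ℕ),
      ((∑ i ∈ Finset.range (n + 1), α i) + ∑ i ∈ Finset.Icc 1 h, β i = j * K + 1) ∧
      ((∑ i ∈ Finset.range (n + 1), (i * K + 1) * α i) +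
        ∑ i ∈ Finset.Icc 1 h, (n * K + 1 + i) * β i = n * K + h + 1) := by
  rintro ⟨α, β, h1, h2⟩
  have key : (∑ i ∈ Finset.range (n + 1), (i * K + 1) * α i)
      = K * (∑ i ∈ Finset.range (n + 1), i * α i)
        + ∑ i ∈ Finset.range (n + 1), α i := by
    rw [Finset.mul_sum, ← Finset.sum_add_distrib]
    exact Finset.sum_congr rfl (fun i _ => by ring)
  have key2 : (∑ i ∈ Finset.Icc 1 h, (n * K + 1 + i) * β i)
      = (∑ i ∈ Finset.Icc 1 h, (n * K + i) * β i) + ∑ i ∈ Finset.Icc 1 h, β i := by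
    rw [← Finset.sum_add_distrib]
    exact Finset.sum_congr rfl (fun i _ => by ring)
  rw [key, key2] at h2
  set A := ∑ i ∈ Finset.range (n + 1), i * α i with hA
  set S := ∑ i ∈ Finset.Icc 1 h, (n * K + i) * β i with hSdef
  by_cases hB : ∀ i ∈ Finset.Icc 1 h, β i = 0
  · have hS0 : S = 0 := Finset.sum_eq_zero fun i hi => by rw [hB i hi, mul_zero]
    have e : K * A + K * j = K * n + h := by
      have h1' := h1
      have h2' := h2
      rw [hS0] at h2'
      nlinarith [h1', h2']
    have hge : K * n ≤ K * (A + j) := by nlinarith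
    have hd : K ∣ h := by
      have : h = K * (A + j) - K * n := by
        have : K * (A + j) = K * n + h := by ring_nf; linarith [e]
        omega
      rw [this]
      exact Nat.dvd_sub (Dvd.intro _ rfl) (Dvd.intro _ rfl)
    have := Nat.le_of_dvd (by omega) hd
    omega
  · push_neg at hB
    obtain ⟨i, hi, hβ⟩ := hB
    have hi1 : 1 ≤ i := (Finset.mem_Icc.mp hi).1
    have hterm : n * K + 1 ≤ (n * K + i) * β i := by
      calc n * K + 1 ≤ n * K + i := by omega
        _ = (n * K + i) * 1 := (mul_one _).symm
        _ ≤ (n * K + i) * β i := Nat.mul_le_mul_left _ (by omega)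
    have hS : n * K + 1 ≤ S :=
      le_trans hterm (Finset.single_le_sum (f := fun i => (n * K + i) * β i) (fun i _ => Nat.zero_le _) hi)
    have hjK : K ≤ j * K := Nat.le_mul_of_pos_left K hj
    have hKh : h ≤ K - 1 := hh2
    have hKh2 : h + 1 ≤ K := by omega
    clear_value A S
    linarith [h1, h2, hS, hjK, hKh2, Nat.zero_le (K * A)]
end

section
/- For every real number l > 0 and every natural number k, one has Γ(k + 3/2) · Γ(1/(2l)) = l^{k+1} · (∏_{j=0}^{k} (2j+1)/(2jl+1)) · Γ(1/2) · Γ(k + 1 + 1/(2l)). In particular, for integer l ≥ 2 the value m* = ∏_{j=0}^{k}(2j+1)/(2jl+1) equals the ratio (∫_0^Ω Sn^{2k+2} dθ)/(∫_0^Ω Cs^{2(k+1)l} dθ) of the Gamma-function expressions (2/l^{k+3/2})·Γ(k+3/2)·Γ(1/(2l))/Γ(k+3/2+1/(2l)) and (2/l^{1/2})·Γ(1/2)·Γ(k+1+1/(2l))/Γ(k+3/2+1/(2l)). -/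
lemma gamma_add_nat_aux (a : ℝ) (ha : 0 < a) (n : ℕ) :
    Real.Gamma (a + n) = (∏ j ∈ Finset.range n, (a + j)) * Real.Gamma a := by
  induction n with
  | zero => simp
  | succ n ih =>
    have h : a + (n + 1 : ℕ) = (a + n) + 1 := by push_cast; ring
    rw [h, Real.Gamma_add_one (by positivity), ih, Finset.prod_range_succ]
    ring

/-- The Gamma-function identity defining the critical value
m* = ∏_{j=0}^{k} (2j+1)/(2jl+1), together with its interpretation as a ratio of
the Gamma expressions for ∫_0^Ω Sn^{2k+2} dθ and ∫_0^Ω Cs^{2(k+1)l} dθ. -/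
theorem mStar_gamma_identity (k : ℕ) :
    (∀ l : ℝ, 0 < l →
      Real.Gamma ((k : ℝ) + 3 / 2) * Real.Gamma (1 / (2 * l)) =
        l ^ (k + 1) * (∏ j ∈ Finset.range (k + 1),
            (2 * (j : ℝ) + 1) / (2 * (j : ℝ) * l + 1)) *
          Real.Gamma (1 / 2) * Real.Gamma ((k : ℝ) + 1 + 1 / (2 * l))) ∧
    (∀ l : ℕ, 2 ≤ l →
      (∏ j ∈ Finset.range (k + 1),
          (2 * (j : ℝ) + 1) / (2 * (j : ℝ) * (l : ℝ) + 1)) =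
        (2 / (l : ℝ) ^ ((k : ℝ) + 3 / 2) * Real.Gamma ((k : ℝ) + 3 / 2) *
            Real.Gamma (1 / (2 * (l : ℝ))) /
            Real.Gamma ((k : ℝ) + 3 / 2 + 1 / (2 * (l : ℝ)))) /
        (2 / (l : ℝ) ^ ((1 : ℝ) / 2) * Real.Gamma (1 / 2) *
            Real.Gamma ((k : ℝ) + 1 + 1 / (2 * (l : ℝ))) /
            Real.Gamma ((k : ℝ) + 3 / 2 + 1 / (2 * (l : ℝ))))) := by
  have main : ∀ l : ℝ, 0 < l →
      Real.Gamma ((k : ℝ) + 3 / 2) * Real.Gamma (1 / (2 * l)) =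
        l ^ (k + 1) * (∏ j ∈ Finset.range (k + 1),
            (2 * (j : ℝ) + 1) / (2 * (j : ℝ) * l + 1)) *
          Real.Gamma (1 / 2) * Real.Gamma ((k : ℝ) + 1 + 1 / (2 * l)) := by
    intro l hl
    have h32 : (k : ℝ) + 3 / 2 = 1 / 2 + ((k + 1 : ℕ) : ℝ) := by push_cast; ring
    have h2 : (k : ℝ) + 1 + 1 / (2 * l) = 1 / (2 * l) + ((k + 1 : ℕ) : ℝ) := by
      push_cast; ring
    rw [h32, h2, gamma_add_nat_aux _ (by norm_num), gamma_add_nat_aux _ (by positivity)]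
    have key : (∏ j ∈ Finset.range (k + 1), ((1 : ℝ) / 2 + (j : ℝ))) =
        l ^ (k + 1) * (∏ j ∈ Finset.range (k + 1),
          (2 * (j : ℝ) + 1) / (2 * (j : ℝ) * l + 1)) *
          ∏ j ∈ Finset.range (k + 1), (1 / (2 * l) + (j : ℝ)) := by
      rw [show l ^ (k + 1) = ∏ _j ∈ Finset.range (k + 1), l by
        simp [Finset.prod_const]]
      rw [← Finset.prod_mul_distrib, ← Finset.prod_mul_distrib]
      refine Finset.prod_congr rfl ?_
      intro j _
      have hj0 : (0 : ℝ) < 2 * (j : ℝ) * l + 1 := by positivity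
      field_simp
      ring
    rw [key]; ring
  refine ⟨main, ?_⟩
  intro l hl
  have hl0 : (0 : ℝ) < (l : ℝ) := by
    have : (2 : ℝ) ≤ (l : ℝ) := by exact_mod_cast hl
    linarith
  have h1 := main (l : ℝ) hl0
  have hC : 0 < Real.Gamma ((k : ℝ) + 3 / 2 + 1 / (2 * (l : ℝ))) :=
    Real.Gamma_pos_of_pos (by positivity)
  have hD : 0 < Real.Gamma ((1 : ℝ) / 2) := Real.Gamma_pos_of_pos (by norm_num)
  have hE : 0 < Real.Gamma ((k : ℝ) + 1 + 1 / (2 * (l : ℝ))) :=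
    Real.Gamma_pos_of_pos (by positivity)
  have hp1 : (0 : ℝ) < (l : ℝ) ^ ((k : ℝ) + 3 / 2) := Real.rpow_pos_of_pos hl0 _
  have hp2 : (0 : ℝ) < (l : ℝ) ^ ((1 : ℝ) / 2) := Real.rpow_pos_of_pos hl0 _
  have hsplit : (l : ℝ) ^ ((k : ℝ) + 3 / 2) =
      (l : ℝ) ^ ((1 : ℝ) / 2) * (l : ℝ) ^ (k + 1) := by
    rw [show (k : ℝ) + 3 / 2 = 1 / 2 + ((k + 1 : ℕ) : ℝ) by push_cast; ring,
      Real.rpow_add hl0, Real.rpow_natCast]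
  have hlp : (0 : ℝ) < (l : ℝ) ^ (k + 1) := by positivity
  have hres :
      (2 / (l : ℝ) ^ ((k : ℝ) + 3 / 2) * Real.Gamma ((k : ℝ) + 3 / 2) *
          Real.Gamma (1 / (2 * (l : ℝ))) /
          Real.Gamma ((k : ℝ) + 3 / 2 + 1 / (2 * (l : ℝ)))) /
        (2 / (l : ℝ) ^ ((1 : ℝ) / 2) * Real.Gamma (1 / 2) *
          Real.Gamma ((k : ℝ) + 1 + 1 / (2 * (l : ℝ))) /
          Real.Gamma ((k : ℝ) + 3 / 2 + 1 / (2 * (l : ℝ)))) =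
      Real.Gamma ((k : ℝ) + 3 / 2) * Real.Gamma (1 / (2 * (l : ℝ))) *
        (l : ℝ) ^ ((1 : ℝ) / 2) /
        ((l : ℝ) ^ ((k : ℝ) + 3 / 2) * Real.Gamma (1 / 2) *
          Real.Gamma ((k : ℝ) + 1 + 1 / (2 * (l : ℝ)))) := by
    field_simp
  rw [hres, h1, hsplit]
  field_simp
  ring_nf
  exact Finset.prod_congr rfl (fun x _ => by ring)
end

section
/- Let k ≥ 1 be an integer. The function u ↦ ∏_{j=0}^{k} (j+u)/(k+j+3u) is strictly increasing on (0, ∞); that is, for all real numbers 0 < u₁ < u₂ one has ∏_{j=0}^{k} (j+u₁)/(k+j+3u₁) < ∏_{j=0}^{k} (j+u₂)/(k+j+3u₂). Moreover, for every u > 0 this product equals 3^{−(k+1)} · √(∏_{j=0}^{k} (1 − 2(k−2j)²/((k+j)(2k−j) + 9ku + 9u²))). -/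
open Finset

private lemma aux_D_pos (k j : ℕ) (u : ℝ) (hk : 1 ≤ k) (hj : j ≤ k) (hu : 0 < u) :
    0 < ((k : ℝ) + j) * (2 * k - j) + 9 * k * u + 9 * u ^ 2 := by
  have hk1 : (1 : ℝ) ≤ k := by exact_mod_cast hk
  have hjk : (j : ℝ) ≤ k := by exact_mod_cast hj
  have hj0 : (0 : ℝ) ≤ j := Nat.cast_nonneg j
  nlinarith [sq_nonneg u, mul_nonneg hj0 (sub_nonneg.2 hjk)]

private lemma aux_c_lt_D (k j : ℕ) (u : ℝ) (hk : 1 ≤ k) (hj : j ≤ k) (hu : 0 < u) :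
    2 * ((k : ℝ) - 2 * j) ^ 2 < ((k : ℝ) + j) * (2 * k - j) + 9 * k * u + 9 * u ^ 2 := by
  have hk1 : (1 : ℝ) ≤ k := by exact_mod_cast hk
  have hjk : (j : ℝ) ≤ k := by exact_mod_cast hj
  have hj0 : (0 : ℝ) ≤ j := Nat.cast_nonneg j
  nlinarith [sq_nonneg u, mul_nonneg hj0 (sub_nonneg.2 hjk)]

private lemma aux_point (k j : ℕ) (u : ℝ) (hk : 1 ≤ k) (hj : j ≤ k) (hu : 0 < u) :
    (((j : ℝ) + u) / ((k : ℝ) + j + 3 * u)) *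
      ((((k : ℝ) - j) + u) / ((k : ℝ) + ((k : ℝ) - j) + 3 * u)) =
      1 / 9 * (1 - 2 * ((k : ℝ) - 2 * j) ^ 2 /
        (((k : ℝ) + j) * (2 * k - j) + 9 * k * u + 9 * u ^ 2)) := by
  have hk1 : (1 : ℝ) ≤ k := by exact_mod_cast hk
  have hjk : (j : ℝ) ≤ k := by exact_mod_cast hj
  have hj0 : (0 : ℝ) ≤ j := Nat.cast_nonneg j
  have hD := aux_D_pos k j u hk hj hu
  have hA : (0 : ℝ) < (k : ℝ) + j + 3 * u := by linarith
  have hB : (0 : ℝ) < (k : ℝ) + ((k : ℝ) - j) + 3 * u := by linarith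
  rw [div_mul_div_comm, one_sub_div hD.ne', eq_comm, ← mul_div_assoc,
    div_eq_div_iff hD.ne' (mul_pos hA hB).ne']
  ring

private lemma aux_sq (k : ℕ) (hk : 1 ≤ k) (u : ℝ) (hu : 0 < u) :
    (∏ j ∈ Finset.range (k + 1), ((j : ℝ) + u) / ((k : ℝ) + (j : ℝ) + 3 * u)) ^ 2 =
      (((3 : ℝ) ^ (k + 1))⁻¹) ^ 2 * ∏ j ∈ Finset.range (k + 1),
        (1 - 2 * ((k : ℝ) - 2 * (j : ℝ)) ^ 2 /
          (((k : ℝ) + (j : ℝ)) * (2 * (k : ℝ) - (j : ℝ)) + 9 * (k : ℝ) * u + 9 * u ^ 2)) := by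
  have hrefl : (∏ j ∈ Finset.range (k + 1), ((j : ℝ) + u) / ((k : ℝ) + (j : ℝ) + 3 * u)) =
      ∏ j ∈ Finset.range (k + 1),
        (((k - j : ℕ) : ℝ) + u) / ((k : ℝ) + ((k - j : ℕ) : ℝ) + 3 * u) := by
    rw [← Finset.prod_range_reflect]
    simp
  have h9 : (((3 : ℝ) ^ (k + 1))⁻¹) ^ 2 = ∏ _j ∈ Finset.range (k + 1), (1 / 9 : ℝ) := by
    rw [Finset.prod_const, Finset.card_range,
      show (1 / 9 : ℝ) = ((3 : ℝ) ^ 2)⁻¹ by norm_num, ← inv_pow, ← inv_pow, ← pow_mul,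
      ← pow_mul, Nat.mul_comm]
  rw [sq]
  nth_rewrite 2 [hrefl]
  rw [← Finset.prod_mul_distrib, h9, ← Finset.prod_mul_distrib]
  refine Finset.prod_congr rfl fun j hj => ?_
  have hjk : j ≤ k := Nat.lt_succ_iff.mp (Finset.mem_range.mp hj)
  rw [Nat.cast_sub hjk]
  exact aux_point k j u hk hjk hu

private lemma aux_f_pos (k : ℕ) (hk : 1 ≤ k) (u : ℝ) (hu : 0 < u) :
    0 < ∏ j ∈ Finset.range (k + 1), ((j : ℝ) + u) / ((k : ℝ) + (j : ℝ) + 3 * u) := by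
  have hk1 : (1 : ℝ) ≤ k := by exact_mod_cast hk
  refine Finset.prod_pos fun j hj => div_pos (by positivity) (by positivity)

/-- Monotonicity in u of ∏_{j=0}^{k} (j+u)/(k+j+3u), together with the
square-root identity used in its proof. -/
theorem product_monotone_and_identity (k : ℕ) (hk : 1 ≤ k) :
    (∀ u₁ u₂ : ℝ, 0 < u₁ → u₁ < u₂ →
      (∏ j ∈ Finset.range (k + 1), ((j : ℝ) + u₁) / ((k : ℝ) + (j : ℝ) + 3 * u₁)) <
      (∏ j ∈ Finset.range (k + 1), ((j : ℝ) + u₂) / ((k : ℝ) + (j : ℝ) + 3 * u₂))) ∧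
    (∀ u : ℝ, 0 < u →
      (∏ j ∈ Finset.range (k + 1), ((j : ℝ) + u) / ((k : ℝ) + (j : ℝ) + 3 * u)) =
        ((3 : ℝ) ^ (k + 1))⁻¹ * Real.sqrt (∏ j ∈ Finset.range (k + 1),
          (1 - 2 * ((k : ℝ) - 2 * (j : ℝ)) ^ 2 /
            (((k : ℝ) + (j : ℝ)) * (2 * (k : ℝ) - (j : ℝ)) + 9 * (k : ℝ) * u + 9 * u ^ 2)))) := by
  have hk1 : (1 : ℝ) ≤ k := by exact_mod_cast hk
  have hPpos : ∀ u : ℝ, 0 < u → ∀ j ∈ Finset.range (k + 1),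
      0 < 1 - 2 * ((k : ℝ) - 2 * (j : ℝ)) ^ 2 /
        (((k : ℝ) + (j : ℝ)) * (2 * (k : ℝ) - (j : ℝ)) + 9 * (k : ℝ) * u + 9 * u ^ 2) := by
    intro u hu j hj
    have hjk : j ≤ k := Nat.lt_succ_iff.mp (Finset.mem_range.mp hj)
    have hD := aux_D_pos k j u hk hjk hu
    have hc := aux_c_lt_D k j u hk hjk hu
    rw [sub_pos, div_lt_one hD]
    exact hc
  constructor
  · intro u₁ u₂ hu₁ h12
    have hu₂ : 0 < u₂ := lt_trans hu₁ h12
    have hf₁ := aux_f_pos k hk u₁ hu₁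
    have hf₂ := aux_f_pos k hk u₂ hu₂
    have hsq : (∏ j ∈ Finset.range (k + 1), ((j : ℝ) + u₁) / ((k : ℝ) + (j : ℝ) + 3 * u₁)) ^ 2 <
        (∏ j ∈ Finset.range (k + 1), ((j : ℝ) + u₂) / ((k : ℝ) + (j : ℝ) + 3 * u₂)) ^ 2 := by
      rw [aux_sq k hk u₁ hu₁, aux_sq k hk u₂ hu₂]
      have h3 : (0 : ℝ) < (((3 : ℝ) ^ (k + 1))⁻¹) ^ 2 := by positivity
      refine mul_lt_mul_of_pos_left ?_ h3
      refine Finset.prod_lt_prod (hPpos u₁ hu₁) ?_ ?_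
      · intro j hj
        have hjk : j ≤ k := Nat.lt_succ_iff.mp (Finset.mem_range.mp hj)
        have hD₁ := aux_D_pos k j u₁ hk hjk hu₁
        have hle : ((k : ℝ) + j) * (2 * k - j) + 9 * k * u₁ + 9 * u₁ ^ 2 ≤
            ((k : ℝ) + j) * (2 * k - j) + 9 * k * u₂ + 9 * u₂ ^ 2 := by nlinarith
        have hc : (0 : ℝ) ≤ 2 * ((k : ℝ) - 2 * j) ^ 2 := by positivity
        have := div_le_div_of_nonneg_left hc hD₁ hle
        linarith
      · refine ⟨0, Finset.mem_range.mpr (Nat.succ_pos k), ?_⟩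
        have hD₁ := aux_D_pos k 0 u₁ hk (Nat.zero_le k) hu₁
        have hlt : ((k : ℝ) + ((0:ℕ):ℝ)) * (2 * k - ((0:ℕ):ℝ)) + 9 * k * u₁ + 9 * u₁ ^ 2 <
            ((k : ℝ) + ((0:ℕ):ℝ)) * (2 * k - ((0:ℕ):ℝ)) + 9 * k * u₂ + 9 * u₂ ^ 2 := by
          push_cast; nlinarith
        have hc : (0 : ℝ) < 2 * ((k : ℝ) - 2 * ((0:ℕ):ℝ)) ^ 2 := by
          push_cast; nlinarith
        have := div_lt_div_of_pos_left hc hD₁ hlt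
        linarith
    exact lt_of_pow_lt_pow_left₀ 2 hf₂.le hsq
  · intro u hu
    have hf := aux_f_pos k hk u hu
    have hP : 0 ≤ ∏ j ∈ Finset.range (k + 1),
        (1 - 2 * ((k : ℝ) - 2 * (j : ℝ)) ^ 2 /
          (((k : ℝ) + (j : ℝ)) * (2 * (k : ℝ) - (j : ℝ)) + 9 * (k : ℝ) * u + 9 * u ^ 2)) :=
      (Finset.prod_pos (hPpos u hu)).le
    rw [← Real.sqrt_sq hf.le, aux_sq k hk u hu, Real.sqrt_mul (sq_nonneg _),
      Real.sqrt_sq (by positivity)]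
end
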